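/- The variance of the q-Bernoulli distribution equals [n]_q · p · (1 - p); i.e., the second moment minus the square of the mean of the distribution assigning probability [n choose κ]_q p^κ (1−·p)^{n-κ} to the value [κ]_q equals [n]_q p(1-p). -/
import Mathlib


/-- The `q`-analog `[n]_q = 1 + q + ⋯ + q^(n-1)` of a natural number. -/
def qNum {R : Type*} [CommRing R] (q : R) (n : ℕ) : R := ∑ i ∈ Finset.range n, q ^ i

/-- The `q`-factorial `[n]! = [1][2]⋯[n]`. -/
def qFact {R : Type*} [CommRing R] (q : R) (n : ℕ) : R := ∏ i ∈ Finset.range n, qNum q (i + 1)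

/-- The Gaussian (`q`-)binomial coefficient, via the `q`-Pascal recursion. -/
def qBinom {R : Type*} [CommRing R] (q : R) : ℕ → ℕ → R
  | _, 0 => 1
  | 0, _ + 1 => 0
  | n + 1, k + 1 => qBinom q n k + q ^ (k + 1) * qBinom q n (k + 1)

/-- The `q`-shifted product `(1 −· p)^m = ∏_{i=0}^{m-1} (1 - p q^i)`. -/
def qProdSub {R : Type*} [CommRing R] (q p : R) (m : ℕ) : R :=
  ∏ i ∈ Finset.range m, (1 - p * q ^ i)

/-- The `q`-shifted power `(x +· y)^m = ∏_{i=0}^{m-1} (x + q^i y)`. -/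
def qProdAdd {R : Type*} [CommRing R] (q x y : R) (m : ℕ) : R :=
  ∏ i ∈ Finset.range m, (x + q ^ i * y)
lemma qNum_succ {R : Type*} [CommRing R] (q : R) (n : ℕ) :
    qNum q (n + 1) = 1 + q * qNum q n := by
  simp [qNum, Finset.sum_range_succ', Finset.mul_sum, pow_succ, mul_comm, add_comm]

lemma qNum_zero {R : Type*} [CommRing R] (q : R) : qNum q 0 = 0 := by simp [qNum]

lemma qNum_one {R : Type*} [CommRing R] (q : R) : qNum q 1 = 1 := by simp [qNum]

lemma qBinom_succ_succ {R : Type*} [CommRing R] (q : R) (n k : ℕ) :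
    qBinom q (n + 1) (k + 1) = qBinom q n k + q ^ (k + 1) * qBinom q n (k + 1) := rfl

lemma qBinom_zero_right {R : Type*} [CommRing R] (q : R) (n : ℕ) : qBinom q n 0 = 1 := by
  cases n <;> rfl

lemma qBinom_eq_zero {R : Type*} [CommRing R] (q : R) : ∀ n k : ℕ, n < k → qBinom q n k = 0
  | _, 0, h => absurd h (by omega)
  | 0, k + 1, _ => rfl
  | n + 1, k + 1, h => by
    have h1 := qBinom_eq_zero q n k (by omega)
    have h2 := qBinom_eq_zero q n (k + 1) (by omega)
    simp [qBinom, h1, h2]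

lemma qProdSub_succ' {R : Type*} [CommRing R] (q p : R) (m : ℕ) :
    qProdSub q p (m + 1) = (1 - p) * qProdSub q (q * p) m := by
  rw [qProdSub, Finset.prod_range_succ']
  simp only [pow_zero, mul_one]
  rw [mul_comm, qProdSub]
  congr 1
  exact Finset.prod_congr rfl fun i _ => by ring

lemma qNum_mul_qBinom {R : Type*} [CommRing R] (q : R) :
    ∀ n k : ℕ, qNum q (k + 1) * qBinom q (n + 1) (k + 1) = qNum q (n + 1) * qBinom q n k
  | 0, 0 => by simp [qBinom, qNum]
  | 0, k + 1 => by
    rw [qBinom_succ_succ, qBinom_eq_zero q 0 (k + 1) (by omega),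
      qBinom_eq_zero q 0 (k + 2) (by omega)]
    ring
  | n + 1, 0 => by
    have ih := qNum_mul_qBinom q n 0
    simp only [qBinom_succ_succ, qBinom_zero_right, qNum_one, qNum_succ, qNum_zero, mul_zero, add_zero] at ih ⊢
    linear_combination q * ih
  | n + 1, k + 1 => by
    have ih1 := qNum_mul_qBinom q n k
    have ih2 := qNum_mul_qBinom q n (k + 1)
    simp only [qBinom_succ_succ, qBinom_zero_right, qNum_succ, qNum_zero, mul_zero, add_zero] at ih1 ih2 ⊢
    linear_combination q * ih1 + q ^ (k + 2) * ih2

lemma qSum_one {R : Type*} [CommRing R] (q : R) :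
    ∀ (n : ℕ) (p : R),
      ∑ κ ∈ Finset.range (n + 1), qBinom q n κ * p ^ κ * qProdSub q p (n - κ) = 1
  | 0, p => by simp [qBinom, qProdSub]
  | n + 1, p => by
    have key : ∑ j ∈ Finset.range (n + 1),
        qBinom q n j * (q * p) ^ j * qProdSub q p (n + 1 - j) = 1 - p := by
      have e : ∀ j ∈ Finset.range (n + 1),
          qBinom q n j * (q * p) ^ j * qProdSub q p (n + 1 - j) =
            (1 - p) * (qBinom q n j * (q * p) ^ j * qProdSub q (q * p) (n - j)) := by
        intro j hj
        have hj' := Finset.mem_range.mp hj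
        have : n + 1 - j = (n - j) + 1 := by omega
        rw [this, qProdSub_succ']
        ring
      rw [Finset.sum_congr rfl e, ← Finset.mul_sum, qSum_one q n (q * p), mul_one]
    rw [Finset.sum_range_succ']
    have split : ∀ k ∈ Finset.range (n + 1),
        qBinom q (n + 1) (k + 1) * p ^ (k + 1) * qProdSub q p (n + 1 - (k + 1)) =
          p * (qBinom q n k * p ^ k * qProdSub q p (n - k)) +
            qBinom q n (k + 1) * (q * p) ^ (k + 1) * qProdSub q p (n - k) := by
      intro k _
      rw [Nat.succ_sub_succ, qBinom_succ_succ]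
      ring
    rw [Finset.sum_congr rfl split, Finset.sum_add_distrib, ← Finset.mul_sum,
      qSum_one q n p, mul_one]
    rw [Finset.sum_range_succ'] at key
    simp only [Nat.succ_sub_succ, Nat.sub_zero, pow_zero, mul_one, one_mul,
      qBinom_zero_right] at key ⊢
    rw [Finset.sum_range_succ, qBinom_eq_zero q n (n + 1) (by omega)]
    linear_combination key

lemma qSum_mean {R : Type*} [CommRing R] (q : R) (n : ℕ) (p : R) :
    ∑ κ ∈ Finset.range (n + 1),
        qNum q κ * (qBinom q n κ * p ^ κ * qProdSub q p (n - κ)) = qNum q n * p := by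
  cases n with
  | zero => simp [qNum_zero]
  | succ n =>
    rw [Finset.sum_range_succ']
    have split : ∀ k ∈ Finset.range (n + 1),
        qNum q (k + 1) * (qBinom q (n + 1) (k + 1) * p ^ (k + 1) *
            qProdSub q p (n + 1 - (k + 1))) =
          (qNum q (n + 1) * p) * (qBinom q n k * p ^ k * qProdSub q p (n - k)) := by
      intro k _
      rw [Nat.succ_sub_succ]
      have h := qNum_mul_qBinom q n k
      linear_combination (p ^ (k + 1) * qProdSub q p (n - k)) * h
    rw [Finset.sum_congr rfl split, ← Finset.mul_sum, qSum_one q n p, qNum_zero]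
    ring

lemma qSum_sq {R : Type*} [CommRing R] (q : R) (n : ℕ) (p : R) :
    ∑ κ ∈ Finset.range (n + 1),
        (qNum q κ) ^ 2 * (qBinom q n κ * p ^ κ * qProdSub q p (n - κ)) =
      qNum q n * p + q * qNum q n * qNum q (n - 1) * p ^ 2 := by
  cases n with
  | zero => simp [qNum_zero]
  | succ n =>
    rw [Finset.sum_range_succ']
    have split : ∀ k ∈ Finset.range (n + 1),
        (qNum q (k + 1)) ^ 2 * (qBinom q (n + 1) (k + 1) * p ^ (k + 1) *
            qProdSub q p (n + 1 - (k + 1))) =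
          (qNum q (n + 1) * p) * (qBinom q n k * p ^ k * qProdSub q p (n - k)) +
            (q * qNum q (n + 1) * p) *
              (qNum q k * (qBinom q n k * p ^ k * qProdSub q p (n - k))) := by
      intro k _
      rw [Nat.succ_sub_succ]
      have h := qNum_mul_qBinom q n k
      rw [qNum_succ q k] at h ⊢
      linear_combination ((1 + q * qNum q k) * p ^ (k + 1) * qProdSub q p (n - k)) * h
    rw [Finset.sum_congr rfl split, Finset.sum_add_distrib, ← Finset.mul_sum, ← Finset.mul_sum,
      qSum_one q n p, qSum_mean q n p, qNum_zero]
    simp only [Nat.add_sub_cancel]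
    ring


/-- Variance of the q-Bernoulli distribution (2.20): second moment minus the square of the
mean equals `[n] p (1 - p)`. -/
theorem qBernoulli_variance {F : Type*} [Field F] (q p : F) (hq : q ≠ 1)
    (n : ℕ) (hn : 1 ≤ n) :
    (∑ κ ∈ Finset.range (n + 1),
        (qNum q κ) ^ 2 * (qBinom q n κ * p ^ κ * qProdSub q p (n - κ))) -
      (∑ κ ∈ Finset.range (n + 1),
        qNum q κ * (qBinom q n κ * p ^ κ * qProdSub q p (n - κ))) ^ 2 =
      qNum q n * p * (1 - p) := by
  obtain ⟨m, rfl⟩ : ∃ m, n = m + 1 := ⟨n - 1, by omega⟩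
  rw [qSum_sq q (m + 1) p, qSum_mean q (m + 1) p]
  simp only [Nat.add_sub_cancel]
  rw [qNum_succ q m]
  ring
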